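/- arXiv:2211.03131 — 3 statements merged into one kernel-verified Lean document; each statement's English description precedes it below -/
import Mathlib

section
/- L²-orthogonality of the Ginzburg–Landau operator to gauge directions: let ε > 0, let u : ℝⁿ → ℂ and A : ℝⁿ → ℝⁿ be C², and let γ : ℝⁿ → ℝ be C² with compact support. Then ∫_{ℝⁿ} ( ⟨S_ε¹(u,A)(x), i u(x) γ(x)⟩ + ε² Σₖ (S_ε²(u,A))ₖ(x) ∂ₖγ(x) ) dx = 0. (No equation is assumed on (u,A); this expresses that S_ε(u,A) is orthogonal, in the ε-weighted L² pairing, to every gauge mode Θ_{(u,A)}[γ] = (iuγ, ∇γ).) -/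
open Complex MeasureTheory

noncomputable section

/-- Partial derivative in the `j`-th coordinate direction. -/
def pd {n : ℕ} {E : Type*} [NormedAddCommGroup E] [NormedSpace ℝ E]
    (j : Fin n) (f : (Fin n → ℝ) → E) (x : Fin n → ℝ) : E :=
  fderiv ℝ f x (Pi.single j 1)

/-- Covariant partial derivative `∂ⱼ^A u = ∂ⱼu − iAⱼu`. -/
def covD {n : ℕ} (j : Fin n) (A : (Fin n → ℝ) → Fin n → ℝ)
    (u : (Fin n → ℝ) → ℂ) (x : Fin n → ℝ) : ℂ :=
  pd j u x - Complex.I * (A x j : ℂ) * u x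

/-- Real pairing `⟨v,w⟩ = Re (v * conj w)`. -/
def rpair (v w : ℂ) : ℝ := (v * (starRingEnd ℂ) w).re

/-- `S_ε¹(u,A) = −ε² Σⱼ ∂ⱼ^A(∂ⱼ^A u) − ½(1−|u|²)u`. -/
def GL1 {n : ℕ} (ε : ℝ) (u : (Fin n → ℝ) → ℂ) (A : (Fin n → ℝ) → Fin n → ℝ)
    (x : Fin n → ℝ) : ℂ :=
  -(ε : ℂ) ^ 2 * ∑ j : Fin n, covD j A (covD j A u) x
    - (1 / 2 : ℂ) * ((1 - Complex.normSq (u x) : ℝ) : ℂ) * u x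

/-- `(S_ε²(u,A))ₖ = −ε² Σⱼ ∂ⱼ(∂ⱼAₖ − ∂ₖAⱼ) − ⟨∂ₖ^A u, iu⟩`. -/
def GL2 {n : ℕ} (ε : ℝ) (u : (Fin n → ℝ) → ℂ) (A : (Fin n → ℝ) → Fin n → ℝ)
    (x : Fin n → ℝ) (k : Fin n) : ℝ :=
  -ε ^ 2 * ∑ j : Fin n,
      pd j (fun y => pd j (fun w => A w k) y - pd k (fun w => A w j) y) x
    - rpair (covD k A u x) (Complex.I * u x)

section Helpers

variable {n : ℕ} {E F : Type*} [NormedAddCommGroup E] [NormedSpace ℝ E]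
  [NormedAddCommGroup F] [NormedSpace ℝ F]

lemma rpair_eq (z w : ℂ) : rpair z w = z.re * w.re + z.im * w.im := by
  simp [rpair, Complex.mul_re]

lemma pd_add {j : Fin n} {f g : (Fin n → ℝ) → E} {x} (hf : DifferentiableAt ℝ f x)
    (hg : DifferentiableAt ℝ g x) :
    pd j (fun y => f y + g y) x = pd j f x + pd j g x := by
  unfold pd; rw [fderiv_fun_add hf hg]; rfl

lemma pd_sub {j : Fin n} {f g : (Fin n → ℝ) → E} {x} (hf : DifferentiableAt ℝ f x)
    (hg : DifferentiableAt ℝ g x) :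
    pd j (fun y => f y - g y) x = pd j f x - pd j g x := by
  unfold pd; rw [fderiv_fun_sub hf hg]; rfl

lemma pd_sum {j : Fin n} {ι : Type*} (s : Finset ι) {f : ι → (Fin n → ℝ) → E} {x}
    (hf : ∀ k ∈ s, DifferentiableAt ℝ (f k) x) :
    pd j (fun y => ∑ k ∈ s, f k y) x = ∑ k ∈ s, pd j (f k) x := by
  unfold pd; rw [fderiv_fun_sum hf]; simp

lemma pd_mul {𝔸 : Type*} [NormedCommRing 𝔸] [NormedAlgebra ℝ 𝔸] {j : Fin n}
    {f g : (Fin n → ℝ) → 𝔸} {x} (hf : DifferentiableAt ℝ f x) (hg : DifferentiableAt ℝ g x) :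
    pd j (fun y => f y * g y) x = pd j f x * g x + f x * pd j g x := by
  unfold pd; rw [fderiv_fun_mul hf hg]
  simp only [ContinuousLinearMap.add_apply, ContinuousLinearMap.smul_apply, smul_eq_mul]
  ring

lemma pd_clm {j : Fin n} (L : E →L[ℝ] F) {f : (Fin n → ℝ) → E} {x}
    (hf : DifferentiableAt ℝ f x) :
    pd j (fun y => L (f y)) x = L (pd j f x) := by
  unfold pd
  rw [show (fun y => L (f y)) = L ∘ f from rfl, fderiv_comp x L.differentiableAt hf,
    L.fderiv]
  rfl

lemma pd_ofReal {j : Fin n} {f : (Fin n → ℝ) → ℝ} {x} (hf : DifferentiableAt ℝ f x) :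
    pd j (fun y => ((f y : ℝ) : ℂ)) x = ((pd j f x : ℝ) : ℂ) :=
  pd_clm Complex.ofRealCLM hf

lemma pd_const_mul {j : Fin n} (c : ℂ) {f : (Fin n → ℝ) → ℂ} {x}
    (hf : DifferentiableAt ℝ f x) :
    pd j (fun y => c * f y) x = c * pd j f x := by
  have := pd_mul (j := j) (f := fun _ => c) (g := f) (differentiableAt_const c) hf
  have hc : pd j (fun _ : Fin n → ℝ => c) x = 0 := by unfold pd; simp
  rw [this, hc]; ring

lemma pd_const_mul_r {j : Fin n} (c : ℝ) {f : (Fin n → ℝ) → ℝ} {x}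
    (hf : DifferentiableAt ℝ f x) :
    pd j (fun y => c * f y) x = c * pd j f x := by
  have := pd_mul (j := j) (f := fun _ => c) (g := f) (differentiableAt_const c) hf
  have hc : pd j (fun _ : Fin n → ℝ => c) x = 0 := by unfold pd; simp
  rw [this, hc]; ring

lemma pd_rpair {j : Fin n} {f g : (Fin n → ℝ) → ℂ} {x} (hf : DifferentiableAt ℝ f x)
    (hg : DifferentiableAt ℝ g x) :
    pd j (fun y => rpair (f y) (g y)) x
      = rpair (pd j f x) (g x) + rpair (f x) (pd j g x) := by
  have hconj : DifferentiableAt ℝ (fun y => (starRingEnd ℂ) (g y)) x :=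
    (Complex.conjCLE.toContinuousLinearMap.differentiableAt).comp x hg
  have h1 : pd j (fun y => (starRingEnd ℂ) (g y)) x = (starRingEnd ℂ) (pd j g x) :=
    pd_clm Complex.conjCLE.toContinuousLinearMap hg
  have h2 : pd j (fun y => rpair (f y) (g y)) x
      = Complex.reCLM (pd j (fun y => f y * (starRingEnd ℂ) (g y)) x) := by
    have := pd_clm (j := j) Complex.reCLM (x := x)
      (f := fun y => f y * (starRingEnd ℂ) (g y)) (hf.mul hconj)
    simpa only [rpair, Complex.reCLM_apply] using this
  rw [h2, pd_mul hf hconj, h1]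
  simp [rpair]

lemma contDiff_pd {j : Fin n} {f : (Fin n → ℝ) → E} (hf : ContDiff ℝ 2 f) :
    ContDiff ℝ 1 (pd j f) := by
  have h := hf.fderiv_right (m := 1) (by norm_num)
  exact h.clm_apply contDiff_const

lemma pd_schwarz {j k : Fin n} {f : (Fin n → ℝ) → E} (hf : ContDiff ℝ 2 f) (x : Fin n → ℝ) :
    pd j (pd k f) x = pd k (pd j f) x := by
  have hd : DifferentiableAt ℝ (fderiv ℝ f) x :=
    (hf.fderiv_right (m := 1) (by norm_num)).differentiable one_ne_zero x
  have e1 : ∀ (i : Fin n) (v : Fin n → ℝ), pd i (fun y => fderiv ℝ f y v) x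
      = fderiv ℝ (fderiv ℝ f) x (Pi.single i 1) v := by
    intro i v
    unfold pd
    rw [fderiv_clm_apply hd (differentiableAt_const v)]
    simp
  have hsymm := ((hf.contDiffAt (x := x)).isSymmSndFDerivAt (by simp)).eq
    (Pi.single j 1) (Pi.single k 1)
  show pd j (fun y => fderiv ℝ f y (Pi.single k 1)) x
      = pd k (fun y => fderiv ℝ f y (Pi.single j 1)) x
  rw [e1 j _, e1 k _, hsymm]

lemma pd_zero_of_nmem_tsupport {j : Fin n} {f : (Fin n → ℝ) → E} {x}
    (hx : x ∉ tsupport f) : pd j f x = 0 := by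
  have h : f =ᶠ[nhds x] (fun _ => 0) := notMem_tsupport_iff_eventuallyEq.1 hx
  unfold pd
  rw [h.fderiv_eq, fderiv_fun_const]
  simp

lemma int_pd_zero (j : Fin n) (g : (Fin n → ℝ) → ℝ) (hg : ContDiff ℝ 1 g)
    (hgc : HasCompactSupport g) : ∫ x : Fin n → ℝ, pd j g x = 0 := by
  obtain ⟨C, hC⟩ := hg.lipschitzWith_of_hasCompactSupport hgc one_ne_zero
  have h1 : LipschitzWith 0 (fun _ : Fin n → ℝ => (1:ℝ)) := LipschitzWith.const 1
  have key := LipschitzWith.integral_lineDeriv_mul_eq (μ := volume) h1 hC hgc (Pi.single j 1)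
  have hc0 : ∀ (x : Fin n → ℝ) (v : Fin n → ℝ),
      lineDeriv ℝ (fun _ : Fin n → ℝ => (1:ℝ)) x v = 0 := by
    intro x v
    rw [(differentiableAt_const (1:ℝ)).lineDeriv_eq_fderiv]
    simp
  simp only [hc0, zero_mul, integral_zero, mul_one] at key
  have hlin : ∀ x, lineDeriv ℝ g x (-(Pi.single j 1)) = - pd j g x := by
    intro x
    rw [(hg.differentiable one_ne_zero x).lineDeriv_eq_fderiv]
    simp [pd]
  simp only [hlin] at key
  have h2 := key.symm
  rw [integral_neg] at h2
  linarith

end Helpers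

theorem statement4 {n : ℕ} (ε : ℝ) (hε : 0 < ε)
    (u : (Fin n → ℝ) → ℂ) (A : (Fin n → ℝ) → Fin n → ℝ) (γ : (Fin n → ℝ) → ℝ)
    (hu : ContDiff ℝ 2 u) (hA : ContDiff ℝ 2 A)
    (hγ : ContDiff ℝ 2 γ) (hγc : HasCompactSupport γ) :
    ∫ x : Fin n → ℝ,
      (rpair (GL1 ε u A x) (Complex.I * u x * (γ x : ℂ))
        + ε ^ 2 * ∑ k : Fin n, GL2 ε u A x k * pd k γ x) = 0 := by
  classical
  -- notation
  set ρ : Fin n → (Fin n → ℝ) → ℝ :=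
    fun k y => rpair (covD k A u y) (Complex.I * u y) with hρdef
  set Fc : Fin n → Fin n → (Fin n → ℝ) → ℝ :=
    fun j k y => pd j (fun w => A w k) y - pd k (fun w => A w j) y with hFcdef
  set g : Fin n → (Fin n → ℝ) → ℝ :=
    fun j y => -ε^2 * (ρ j y * γ y) - ε^4 * ∑ k : Fin n, Fc j k y * pd k γ y with hgdef
  -- basic smoothness
  have hAk : ∀ k : Fin n, ContDiff ℝ 2 (fun y => A y k) := fun k =>
    (ContinuousLinearMap.proj (R := ℝ) (φ := fun _ : Fin n => ℝ) k).contDiff.comp hA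
  have hAkC : ∀ k : Fin n, ContDiff ℝ 2 (fun y => ((A y k : ℝ) : ℂ)) := fun k =>
    Complex.ofRealCLM.contDiff.comp (hAk k)
  have hpdu : ∀ j : Fin n, ContDiff ℝ 1 (pd j u) := fun j => contDiff_pd hu
  have hcov : ∀ j : Fin n, ContDiff ℝ 1 (covD j A u) := by
    intro j
    have : ContDiff ℝ 1 (fun y => Complex.I * ((A y j : ℝ) : ℂ) * u y) :=
      ((contDiff_const.mul ((hAkC j).of_le one_le_two)).mul (hu.of_le one_le_two))
    exact (hpdu j).sub this
  have hconjIu : ContDiff ℝ 1 (fun y => (starRingEnd ℂ) (Complex.I * u y)) :=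
    Complex.conjCLE.toContinuousLinearMap.contDiff.comp
      (contDiff_const.mul (hu.of_le one_le_two))
  have hρ : ∀ k : Fin n, ContDiff ℝ 1 (ρ k) := by
    intro k
    have : ContDiff ℝ 1 (fun y => (covD k A u y) * (starRingEnd ℂ) (Complex.I * u y)) :=
      (hcov k).mul hconjIu
    exact Complex.reCLM.contDiff.comp this
  have hFc : ∀ j k : Fin n, ContDiff ℝ 1 (Fc j k) := fun j k =>
    (contDiff_pd (hAk k)).sub (contDiff_pd (hAk j))
  have hpdγ : ∀ k : Fin n, ContDiff ℝ 1 (pd k γ) := fun k => contDiff_pd hγ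
  have hg1 : ∀ j : Fin n, ContDiff ℝ 1 (g j) := by
    intro j
    refine ContDiff.sub ?_ ?_
    · exact contDiff_const.mul ((hρ j).mul (hγ.of_le one_le_two))
    · exact contDiff_const.mul (ContDiff.sum fun k _ => (hFc j k).mul (hpdγ k))
  -- compact support of g j
  have hgc : ∀ j : Fin n, HasCompactSupport (g j) := by
    intro j
    apply HasCompactSupport.intro hγc
    intro x hx
    have hγ0 : γ x = 0 := image_eq_zero_of_notMem_tsupport hx
    have hpdγ0 : ∀ k : Fin n, pd k γ x = 0 := fun k => pd_zero_of_nmem_tsupport hx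
    simp [hgdef, hγ0, hpdγ0]
  -- pointwise differentiability shortcuts
  have dAk : ∀ (k : Fin n) x, DifferentiableAt ℝ (fun y => A y k) x := fun k x =>
    ((hAk k).differentiable (by norm_num)) x
  have dAkC : ∀ (k : Fin n) x, DifferentiableAt ℝ (fun y => ((A y k : ℝ) : ℂ)) x := fun k x =>
    ((hAkC k).differentiable (by norm_num)) x
  have du : ∀ x, DifferentiableAt ℝ u x := fun x => (hu.differentiable (by norm_num)) x
  have dpdu : ∀ (j : Fin n) x, DifferentiableAt ℝ (pd j u) x := fun j x =>
    ((hpdu j).differentiable one_ne_zero) x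
  have dcov : ∀ (j : Fin n) x, DifferentiableAt ℝ (covD j A u) x := fun j x =>
    ((hcov j).differentiable one_ne_zero) x
  have dγ : ∀ x, DifferentiableAt ℝ γ x := fun x => (hγ.differentiable (by norm_num)) x
  have dpdγ : ∀ (k : Fin n) x, DifferentiableAt ℝ (pd k γ) x := fun k x =>
    ((hpdγ k).differentiable one_ne_zero) x
  have dρ : ∀ (k : Fin n) x, DifferentiableAt ℝ (ρ k) x := fun k x =>
    ((hρ k).differentiable one_ne_zero) x
  have dFc : ∀ (j k : Fin n) x, DifferentiableAt ℝ (Fc j k) x := fun j k x =>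
    ((hFc j k).differentiable one_ne_zero) x
  have dIu : ∀ x, DifferentiableAt ℝ (fun y => Complex.I * u y) x := fun x =>
    (differentiableAt_const _).mul (du x)
  have dIAu : ∀ (j : Fin n) x,
      DifferentiableAt ℝ (fun y => Complex.I * ((A y j : ℝ) : ℂ) * u y) x := fun j x =>
    (((differentiableAt_const _).mul (dAkC j x)).mul (du x))
  -- Key pointwise identity: the covariant "divergence" identity
  have keyj : ∀ (j : Fin n) x,
      rpair (covD j A (covD j A u) x) (Complex.I * u x) = pd j (ρ j) x := by
    intro j x
    have hIu : pd j (fun y => Complex.I * u y) x = Complex.I * pd j u x :=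
      pd_const_mul _ (du x)
    have hIA : pd j (fun y => Complex.I * ((A y j : ℝ) : ℂ)) x
        = Complex.I * ((pd j (fun y => A y j) x : ℝ) : ℂ) := by
      have := pd_const_mul (j := j) Complex.I (f := fun y => ((A y j : ℝ) : ℂ)) (dAkC j x)
      rw [this, pd_ofReal (dAk j x)]
    have hIAu : pd j (fun y => Complex.I * ((A y j : ℝ) : ℂ) * u y) x
        = Complex.I * ((pd j (fun y => A y j) x : ℝ) : ℂ) * u x
          + Complex.I * ((A x j : ℝ) : ℂ) * pd j u x := by
      have := pd_mul (j := j) (f := fun y => Complex.I * ((A y j : ℝ) : ℂ)) (g := u)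
        ((differentiableAt_const _).mul (dAkC j x)) (du x)
      rw [this, hIA]
    have hcovd : pd j (covD j A u) x
        = pd j (pd j u) x - (Complex.I * ((pd j (fun y => A y j) x : ℝ) : ℂ) * u x
          + Complex.I * ((A x j : ℝ) : ℂ) * pd j u x) := by
      have := pd_sub (j := j) (f := pd j u)
        (g := fun y => Complex.I * ((A y j : ℝ) : ℂ) * u y) (dpdu j x) (dIAu j x)
      rw [show covD j A u = fun y => pd j u y - Complex.I * ((A y j : ℝ) : ℂ) * u y from rfl]
      rw [this, hIAu]
    have hpdρ : pd j (ρ j) x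
        = rpair (pd j (covD j A u) x) (Complex.I * u x)
          + rpair (covD j A u x) (Complex.I * pd j u x) := by
      rw [hρdef]
      rw [pd_rpair (dcov j x) (dIu x), hIu]
    rw [hpdρ, hcovd]
    rw [show covD j A (covD j A u) x
        = pd j (covD j A u) x - Complex.I * ((A x j : ℝ) : ℂ) * covD j A u x from rfl]
    rw [hcovd]
    rw [show covD j A u x = pd j u x - Complex.I * ((A x j : ℝ) : ℂ) * u x from rfl]
    simp only [rpair_eq, Complex.mul_re, Complex.mul_im, Complex.sub_re, Complex.sub_im,
      Complex.add_re, Complex.add_im, Complex.I_re, Complex.I_im, Complex.ofReal_re,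
      Complex.ofReal_im]
    ring
  -- rpair algebra helpers
  have rpair_sub_left : ∀ a b w : ℂ, rpair (a - b) w = rpair a w - rpair b w := by
    intro a b w; simp only [rpair_eq, Complex.sub_re, Complex.sub_im]; ring
  have rpair_real_left : ∀ (r : ℝ) (a w : ℂ), rpair ((r : ℂ) * a) w = r * rpair a w := by
    intro r a w
    simp only [rpair_eq, Complex.mul_re, Complex.mul_im, Complex.ofReal_re, Complex.ofReal_im]
    ring
  have rpair_real_right : ∀ (r : ℝ) (a w : ℂ), rpair a (w * (r : ℂ)) = r * rpair a w := by
    intro r a w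
    simp only [rpair_eq, Complex.mul_re, Complex.mul_im, Complex.ofReal_re, Complex.ofReal_im]
    ring
  have rpair_sum_left : ∀ (w : ℂ) (f : Fin n → ℂ),
      rpair (∑ j : Fin n, f j) w = ∑ j : Fin n, rpair (f j) w := by
    intro w f
    simp only [rpair_eq, Complex.re_sum, Complex.im_sum, Finset.sum_mul, ← Finset.sum_add_distrib]
  have rpair_pot : ∀ (r s : ℝ) (a : ℂ),
      rpair ((r : ℂ) * a) (Complex.I * a * (s : ℂ)) = 0 := by
    intro r s a
    simp only [rpair_eq, Complex.mul_re, Complex.mul_im, Complex.ofReal_re, Complex.ofReal_im,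
      Complex.I_re, Complex.I_im]
    ring
  -- GL1 pairing reduction
  have hGL1 : ∀ x, rpair (GL1 ε u A x) (Complex.I * u x * (γ x : ℂ))
      = -ε^2 * γ x * ∑ j : Fin n, rpair (covD j A (covD j A u) x) (Complex.I * u x) := by
    intro x
    have e0 : GL1 ε u A x
        = (((-ε^2 : ℝ)) : ℂ) * (∑ j : Fin n, covD j A (covD j A u) x)
          - (((1 - Complex.normSq (u x))/2 : ℝ) : ℂ) * u x := by
      rw [GL1]; push_cast; ring
    rw [e0, rpair_sub_left, rpair_pot, rpair_real_right, rpair_real_left, rpair_sum_left]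
    ring
  -- GL2 unfolding
  have hGL2 : ∀ x (k : Fin n), GL2 ε u A x k
      = -ε^2 * ∑ j : Fin n, pd j (Fc j k) x - ρ k x := fun x k => rfl
  -- Schwarz cancellation
  have hcancel : ∀ x, ∑ j : Fin n, ∑ k : Fin n, Fc j k x * pd j (pd k γ) x = 0 := by
    intro x
    have hanti : ∀ j k : Fin n, Fc j k x = - Fc k j x := by
      intro j k; simp only [hFcdef]; ring
    have hswap : (∑ j : Fin n, ∑ k : Fin n, Fc j k x * pd j (pd k γ) x)
        = - ∑ j : Fin n, ∑ k : Fin n, Fc j k x * pd j (pd k γ) x := by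
      conv_lhs => rw [Finset.sum_comm]
      rw [← Finset.sum_neg_distrib]
      refine Finset.sum_congr rfl fun j _ => ?_
      rw [← Finset.sum_neg_distrib]
      refine Finset.sum_congr rfl fun k _ => ?_
      rw [hanti k j, pd_schwarz hγ x]
      ring
    linarith
  -- expansion of pd j (g j)
  have hexp : ∀ (j : Fin n) x, pd j (g j) x
      = -ε^2 * (pd j (ρ j) x * γ x) - ε^2 * (ρ j x * pd j γ x)
        - ε^4 * ∑ k : Fin n, pd j (Fc j k) x * pd k γ x
        - ε^4 * (∑ k : Fin n, Fc j k x * pd j (pd k γ) x) := by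
    intro j x
    have d1 : DifferentiableAt ℝ (fun y => -ε^2 * (ρ j y * γ y)) x :=
      (differentiableAt_const _).mul ((dρ j x).mul (dγ x))
    have dsum : DifferentiableAt ℝ (fun y => ∑ k : Fin n, Fc j k y * pd k γ y) x :=
      DifferentiableAt.fun_sum fun k _ => (dFc j k x).mul (dpdγ k x)
    have d2 : DifferentiableAt ℝ (fun y => ε^4 * ∑ k : Fin n, Fc j k y * pd k γ y) x :=
      (differentiableAt_const _).mul dsum
    have e1 : pd j (g j) x = pd j (fun y => -ε^2 * (ρ j y * γ y)) x
        - pd j (fun y => ε^4 * ∑ k : Fin n, Fc j k y * pd k γ y) x := by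
      rw [hgdef]
      exact pd_sub d1 d2
    rw [e1, pd_const_mul_r (f := fun y => ρ j y * γ y) _ ((dρ j x).mul (dγ x)), pd_mul (dρ j x) (dγ x),
      pd_const_mul_r _ dsum, pd_sum (f := fun k y => Fc j k y * pd k γ y) Finset.univ (fun k _ => (dFc j k x).mul (dpdγ k x))]
    have e2 : ∀ k : Fin n, pd j (fun y => Fc j k y * pd k γ y) x
        = pd j (Fc j k) x * pd k γ x + Fc j k x * pd j (pd k γ) x :=
      fun k => pd_mul (dFc j k x) (dpdγ k x)
    rw [Finset.sum_congr rfl fun k _ => e2 k, Finset.sum_add_distrib]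
    ring
  -- pointwise key identity
  have keyx : (fun x : Fin n → ℝ =>
        rpair (GL1 ε u A x) (Complex.I * u x * (γ x : ℂ))
          + ε ^ 2 * ∑ k : Fin n, GL2 ε u A x k * pd k γ x)
      = fun x : Fin n → ℝ => ∑ j : Fin n, pd j (g j) x := by
    funext x
    rw [hGL1 x]
    simp only [keyj]
    have hR : ∑ j : Fin n, pd j (g j) x
        = (∑ j : Fin n, -ε^2 * (pd j (ρ j) x * γ x))
          + ((∑ j : Fin n, -ε^2 * (ρ j x * pd j γ x))
            + (∑ j : Fin n, ∑ k : Fin n, -ε^4 * (pd j (Fc j k) x * pd k γ x))) := by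
      rw [Finset.sum_congr rfl fun j (_ : j ∈ Finset.univ) => hexp j x]
      have hz : ∑ j : Fin n, ε^4 * (∑ k : Fin n, Fc j k x * pd j (pd k γ) x)
          = ε^4 * ∑ j : Fin n, ∑ k : Fin n, Fc j k x * pd j (pd k γ) x := by
        rw [Finset.mul_sum]
      simp only [sub_eq_add_neg, Finset.sum_add_distrib, Finset.sum_neg_distrib]
      rw [hz, hcancel x]
      simp only [neg_mul, Finset.sum_neg_distrib, mul_zero, neg_zero, add_zero]
      rw [show (∑ j : Fin n, ε^4 * ∑ k : Fin n, pd j (Fc j k) x * pd k γ x)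
          = ∑ j : Fin n, ∑ k : Fin n, ε^4 * (pd j (Fc j k) x * pd k γ x) from
        Finset.sum_congr rfl fun j _ => Finset.mul_sum _ _ _]
      ring
    rw [hR]
    have hk : ∀ k : Fin n,
        ε^2 * ((-ε^2 * ∑ j : Fin n, pd j (Fc j k) x - ρ k x) * pd k γ x)
        = -ε^2 * (ρ k x * pd k γ x)
          + ∑ j : Fin n, -ε^4 * (pd j (Fc j k) x * pd k γ x) := by
      intro k
      have hs : ∑ j : Fin n, -ε^4 * (pd j (Fc j k) x * pd k γ x)
          = -ε^4 * ((∑ j : Fin n, pd j (Fc j k) x) * pd k γ x) := by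
        rw [Finset.sum_mul, Finset.mul_sum]
      rw [hs]; ring
    have hL2 : ε ^ 2 * ∑ k : Fin n, GL2 ε u A x k * pd k γ x
        = (∑ k : Fin n, -ε^2 * (ρ k x * pd k γ x))
          + (∑ j : Fin n, ∑ k : Fin n, -ε^4 * (pd j (Fc j k) x * pd k γ x)) := by
      simp only [hGL2]
      rw [Finset.mul_sum]
      rw [Finset.sum_congr rfl fun k (_ : k ∈ Finset.univ) => hk k]
      rw [Finset.sum_add_distrib]
      congr 1
      exact Finset.sum_comm
    rw [hL2]
    have h1 : -ε^2 * γ x * ∑ j : Fin n, pd j (ρ j) x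
        = ∑ j : Fin n, -ε^2 * (pd j (ρ j) x * γ x) := by
      rw [Finset.mul_sum]
      exact Finset.sum_congr rfl fun j _ => by ring
    rw [h1]
  rw [keyx]
  -- integrate
  have hint : ∀ j : Fin n, Integrable (fun x => pd j (g j) x) volume := by
    intro j
    have hcont : Continuous (pd j (g j)) := by
      have h := (hg1 j).fderiv_right (m := 0) (by norm_num)
      exact (h.clm_apply contDiff_const).continuous
    have hcs : HasCompactSupport (pd j (g j)) := by
      apply HasCompactSupport.intro (hgc j)
      intro x hx
      exact pd_zero_of_nmem_tsupport hx
    exact hcont.integrable_of_hasCompactSupport hcs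
  rw [integral_finset_sum Finset.univ fun j _ => hint j]
  exact Finset.sum_eq_zero fun j _ => int_pd_zero j (g j) (hg1 j) (hgc j)

end
end

section
/- Smooth extension of circle-minus-a-point valued maps (core of Lemma A.2 of the paper): let N be a smooth manifold (finite-dimensional, Hausdorff, second countable, without boundary), F ⊆ N a closed subset, U ⊆ N an open neighborhood of F, and z₀ a point of the unit circle S¹ = {z ∈ ℂ : |z| = 1}. If g : U → ℂ is smooth and g(x) ∈ S¹ ∖ {z₀} for every x ∈ U, then there exists a smooth map ḡ : N → ℂ with ḡ(x) ∈ S¹ ∖ {z₀} for every x ∈ N and ḡ(x) = g(x) for every x ∈ F. -/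
/-!
STATEMENT 11 (core of Lemma A.2 of the paper): a smooth map defined on a neighborhood of
a closed set `F` of a smooth manifold `N`, with values in the punctured circle
`S¹ \ {z₀}`, extends to a smooth map `N → S¹ \ {z₀}` agreeing with it on `F`.
-/

open Manifold

theorem statement11 (d : ℕ) (N : Type*) [TopologicalSpace N]
    [ChartedSpace (EuclideanSpace ℝ (Fin d)) N]
    [IsManifold (𝓡 d) (⊤ : ℕ∞) N] [T2Space N] [SecondCountableTopology N]
    (F : Set N) (hF : IsClosed F) (U : Set N) (hU : IsOpen U) (hFU : F ⊆ U)
    (z₀ : ℂ) (hz₀ : ‖z₀‖ = 1)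
    (g : N → ℂ) (hg : ContMDiffOn (𝓡 d) 𝓘(ℝ, ℂ) (⊤ : ℕ∞) g U)
    (hgval : ∀ x ∈ U, ‖g x‖ = 1 ∧ g x ≠ z₀) :
    ∃ gbar : N → ℂ,
      ContMDiff (𝓡 d) 𝓘(ℝ, ℂ) (⊤ : ℕ∞) gbar ∧
      (∀ x : N, ‖gbar x‖ = 1 ∧ gbar x ≠ z₀) ∧
      (∀ x ∈ F, gbar x = g x) := by
  have hz₀ne : z₀ ≠ 0 := by
    intro h; rw [h, norm_zero] at hz₀; norm_num at hz₀
  -- the rotated map `w x = g x / z₀`, of norm 1 and `≠ 1` on `U`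
  set w : N → ℂ := fun x => g x / z₀ with hw
  have hwval : ∀ x ∈ U, ‖w x‖ = 1 ∧ w x ≠ 1 := by
    intro x hx
    obtain ⟨h1, h2⟩ := hgval x hx
    constructor
    · simp [hw, norm_div, h1, hz₀]
    · intro h
      apply h2
      field_simp [hw] at h
      rw [hw] at h; exact (div_eq_one_iff_eq hz₀ne).mp h
  have hslit : ∀ x ∈ U, -w x ∈ Complex.slitPlane := by
    intro x hx
    obtain ⟨h1, h2⟩ := hwval x hx
    rw [Complex.mem_slitPlane_iff]
    by_contra hcon
    push_neg at hcon
    obtain ⟨hre, him⟩ := hcon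
    simp only [Complex.neg_re, Complex.neg_im, neg_eq_zero] at hre him
    -- then `w x` is a nonneg real of norm 1, so `w x = 1`
    apply h2
    have hre' : 0 ≤ (w x).re := by
      have : -(w x).re ≤ 0 := by simpa using hre
      linarith
    have hwx : w x = ((w x).re : ℂ) := Complex.ext (by simp) (by simp [him])
    rw [hwx] at h1 ⊢
    rw [Complex.norm_real, Real.norm_eq_abs, abs_of_nonneg hre'] at h1
    rw [h1]
    norm_num
  -- the global "angle" function, smooth on `U`
  set ψ : N → ℝ := fun x => (Complex.log (-(w x))).im with hψ
  have hψarg : ∀ x ∈ U, ψ x = Complex.arg (-(w x)) := fun x _ => Complex.log_im _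
  have hψbound : ∀ x ∈ U, ψ x ∈ Set.Ioo (-Real.pi) Real.pi := by
    intro x hx
    rw [hψarg x hx]
    refine ⟨Complex.neg_pi_lt_arg _, ?_⟩
    exact lt_of_le_of_ne (Complex.arg_le_pi _)
      (fun h => Complex.slitPlane_arg_ne_pi (hslit x hx) h)
  have hψsmooth : ContMDiffOn (𝓡 d) 𝓘(ℝ, ℝ) (⊤ : ℕ∞) ψ U := by
    intro x hx
    have hgx : ContMDiffAt (𝓡 d) 𝓘(ℝ, ℂ) (⊤ : ℕ∞) g x :=
      (hg x hx).contMDiffAt (hU.mem_nhds hx)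
    have hc : ContDiff ℝ ⊤ (fun z : ℂ => -(z / z₀)) := (contDiff_id.div_const z₀).neg
    have h1 : ContMDiffAt (𝓡 d) 𝓘(ℝ, ℂ) (⊤ : ℕ∞) ((fun z : ℂ => -(z / z₀)) ∘ g) x :=
      (hc.of_le le_top).comp_contMDiffAt hgx
    have h2 : ContDiffAt ℝ ⊤ Complex.log (((fun z : ℂ => -(z / z₀)) ∘ g) x) :=
      (Complex.contDiffAt_log (hslit x hx)).restrict_scalars ℝ
    have h3 : ContMDiffAt (𝓡 d) 𝓘(ℝ, ℂ) (⊤ : ℕ∞) (Complex.log ∘ ((fun z : ℂ => -(z / z₀)) ∘ g)) x :=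
      (h2.of_le le_top).comp_contMDiffAt h1
    have h4 : ContMDiffAt (𝓡 d) 𝓘(ℝ, ℝ) (⊤ : ℕ∞)
        ((fun z : ℂ => z.im) ∘ (Complex.log ∘ ((fun z : ℂ => -(z / z₀)) ∘ g))) x :=
      Complex.imCLM.contDiff.comp_contMDiffAt h3
    exact h4.contMDiffWithinAt
  -- a cutoff function
  haveI : LocallyCompactSpace N := Manifold.locallyCompact_of_finiteDimensional (𝓡 d)
  haveI : TopologicalSpace.MetrizableSpace N := Manifold.metrizableSpace (𝓡 d) N
  letI : MetricSpace N := TopologicalSpace.metrizableSpaceMetric N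
  obtain ⟨V, hV, hFV, hVU⟩ := normal_exists_closure_subset hF hU hFU
  obtain ⟨f, hf0, hf1, hf01⟩ := exists_contMDiffMap_zero_one_of_isClosed (𝓡 d) (n := ⊤)
    (isClosed_compl_iff.mpr hV) hF (by
      rw [Set.disjoint_compl_left_iff_subset]; exact hFV)
  -- the damped angle
  set q : N → ℝ := fun x => f x * ψ x with hq
  have hqU : ∀ x ∉ U, q x = 0 := by
    intro x hx
    have : x ∉ V := fun h => hx (hVU (subset_closure h))
    simp [hq, hf0 this]
  have hqsmooth : ContMDiff (𝓡 d) 𝓘(ℝ, ℝ) (⊤ : ℕ∞) q := by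
    intro x
    by_cases hx : x ∈ U
    · exact (f.contMDiff x).mul ((hψsmooth x hx).contMDiffAt (hU.mem_nhds hx))
    · have hx' : x ∈ (closure V)ᶜ := fun h => hx (hVU h)
      have hopen : IsOpen (closure V)ᶜ := isClosed_closure.isOpen_compl
      have : q =ᶠ[nhds x] (fun _ => 0) := by
        filter_upwards [hopen.mem_nhds hx'] with y hy
        have : y ∉ V := fun h => hy (subset_closure h)
        simp [hq, hf0 this]
      exact (contMDiff_const (c := (0:ℝ))).contMDiffAt.congr_of_eventuallyEq this
  have hqbound : ∀ x, q x ∈ Set.Ioo (-Real.pi) Real.pi := by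
    intro x
    by_cases hx : x ∈ U
    · obtain ⟨hl, hr⟩ := hψbound x hx
      obtain ⟨h0, h1⟩ := hf01 x
      have habs : |ψ x| < Real.pi := abs_lt.mpr ⟨hl, hr⟩
      have : |q x| < Real.pi := by
        calc |q x| = |f x| * |ψ x| := abs_mul _ _
        _ ≤ 1 * |ψ x| := by
            apply mul_le_mul_of_nonneg_right _ (abs_nonneg _)
            rw [abs_of_nonneg h0]; exact h1
        _ < Real.pi := by rw [one_mul]; exact habs
      exact abs_lt.mp this
    · rw [hqU x hx]; exact ⟨neg_neg_iff_pos.mpr Real.pi_pos, Real.pi_pos⟩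
  -- the extension
  refine ⟨fun x => z₀ * Complex.exp ((Real.pi + q x : ℝ) * Complex.I), ?_, ?_, ?_⟩
  · -- smoothness
    have he : ContDiff ℝ ⊤ (fun t : ℝ => z₀ * Complex.exp ((Real.pi + t : ℝ) * Complex.I)) := by
      apply ContDiff.mul contDiff_const
      apply ((Complex.contDiff_exp (𝕜 := ℂ)).restrict_scalars ℝ).comp
      apply ContDiff.mul _ contDiff_const
      exact Complex.ofRealCLM.contDiff.comp (contDiff_const.add contDiff_id)
    show ContMDiff (𝓡 d) 𝓘(ℝ, ℂ) (⊤ : ℕ∞)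
      ((fun t : ℝ => z₀ * Complex.exp ((Real.pi + t : ℝ) * Complex.I)) ∘ q)
    exact (he.of_le le_top).comp_contMDiff hqsmooth
  · -- values
    intro x
    constructor
    · rw [norm_mul, hz₀, one_mul, Complex.norm_exp_ofReal_mul_I]
    · intro h
      nth_rewrite 2 [show z₀ = z₀ * 1 by ring] at h
      have h := mul_left_cancel₀ hz₀ne h
      rw [Complex.exp_eq_one_iff] at h
      obtain ⟨n, hn⟩ := h
      have hc : ((Real.pi + q x : ℝ) : ℂ) = ((n : ℝ) * (2 * Real.pi) : ℝ) := by
        apply mul_right_cancel₀ Complex.I_ne_zero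
        rw [hn]; push_cast; ring
      have hr : Real.pi + q x = (n : ℝ) * (2 * Real.pi) := by exact_mod_cast hc
      obtain ⟨hl, hu⟩ := hqbound x
      have h0 : (0:ℝ) < (n : ℝ) * (2 * Real.pi) := by rw [← hr]; linarith
      have h2 : (n : ℝ) * (2 * Real.pi) < 2 * Real.pi := by rw [← hr]; linarith
      have hnpos : (0:ℝ) < (n:ℝ) := by nlinarith [Real.pi_pos]
      have hn1 : (1:ℝ) ≤ (n:ℝ) := by exact_mod_cast (by exact_mod_cast hnpos : (0:ℤ) < n)
      nlinarith [Real.pi_pos]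
  · -- agreement on F
    intro x hx
    have hxU : x ∈ U := hFU hx
    have hfx : f x = 1 := hf1 hx
    have hqx : q x = Complex.arg (-(w x)) := by
      rw [hq]; simp only [hfx, one_mul]; exact hψarg x hxU
    have habs : ‖-(w x)‖ = 1 := by
      rw [norm_neg]; exact (hwval x hxU).1
    have hexp : Complex.exp ((Complex.arg (-(w x)) : ℝ) * Complex.I) = -(w x) := by
      have := Complex.norm_mul_exp_arg_mul_I (-(w x))
      rwa [habs, Complex.ofReal_one, one_mul] at this
    have hsplit : Complex.exp ((Real.pi + q x : ℝ) * Complex.I)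
        = Complex.exp ((Real.pi : ℝ) * Complex.I) * Complex.exp ((q x : ℝ) * Complex.I) := by
      rw [← Complex.exp_add]; push_cast; ring_nf
    show z₀ * Complex.exp ((Real.pi + q x : ℝ) * Complex.I) = g x
    rw [hsplit, Complex.exp_pi_mul_I, hqx, hexp]
    field_simp [hw]
    simp only [hw]; field_simp
end

section
/- The zero set of the perturbed vortex profile is a smooth graph (the concluding step in the proof of the main theorem): let m ≥ 1 and K > 0. Let u₀ : ℝ² → ℝ² be C¹ with u₀(0) = 0, with Du₀(0) invertible, and such that there exists c₀ > 0 with |u₀(τ)| ≥ c₀ min(|τ|, 1) for all τ ∈ ℝ². Let g : ℝᵐ → ℝ² and θ : ℝᵐ × ℝ² → ℝ² be C¹ with sup-norms of g, θ and of their first derivatives bounded by K. Then there exist ε₀, δ, C > 0, depending only on u₀ and K, such that for every ε ∈ (0, ε₀) the set { (y,z) ∈ ℝᵐ × ℝ² : |z| < δ and u₀((z − ε²g(y))/ε) + ε² θ(y, z/ε) = 0 } is exactly the graph { (y, ζ(y)) : y ∈ ℝᵐ } of a C¹ map ζ : ℝᵐ → ℝ² satisfying |ζ(y) − ε²g(y)|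 ≤ Cε³ for all y ∈ ℝᵐ. -/
/-!
STATEMENT 14: the zero set of the perturbed vortex profile
`u₀((z − ε²g(y))/ε) + ε²θ(y, z/ε)` in the region `|z| < δ` is exactly the graph of a C¹
map `ζ : ℝᵐ → ℝ²` with `ζ = ε²g + O(ε³)`, with constants depending only on `u₀` and `K`.
-/

noncomputable section

open Metric Set

set_option maxHeartbeats 1000000 in

theorem statement14 (m : ℕ) (hm : 1 ≤ m) (K : ℝ) (hK : 0 < K)
    (u₀ : EuclideanSpace ℝ (Fin 2) → EuclideanSpace ℝ (Fin 2))
    (hu₀ : ContDiff ℝ 1 u₀) (hu₀0 : u₀ 0 = 0)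
    (hinv : Function.Bijective (fderiv ℝ u₀ 0))
    (hlow : ∃ c₀ : ℝ, 0 < c₀ ∧
      ∀ τ : EuclideanSpace ℝ (Fin 2), c₀ * min ‖τ‖ 1 ≤ ‖u₀ τ‖) :
    ∃ ε₀ δ C : ℝ, 0 < ε₀ ∧ 0 < δ ∧ 0 < C ∧
      ∀ (g : EuclideanSpace ℝ (Fin m) → EuclideanSpace ℝ (Fin 2))
        (θ : EuclideanSpace ℝ (Fin m) × EuclideanSpace ℝ (Fin 2) →
              EuclideanSpace ℝ (Fin 2)),
        ContDiff ℝ 1 g → ContDiff ℝ 1 θ →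
        (∀ y, ‖g y‖ ≤ K) → (∀ y, ‖fderiv ℝ g y‖ ≤ K) →
        (∀ p, ‖θ p‖ ≤ K) → (∀ p, ‖fderiv ℝ θ p‖ ≤ K) →
        ∀ ε : ℝ, 0 < ε → ε < ε₀ →
          ∃ ζ : EuclideanSpace ℝ (Fin m) → EuclideanSpace ℝ (Fin 2),
            ContDiff ℝ 1 ζ ∧
            (∀ y, ‖ζ y - ε ^ 2 • g y‖ ≤ C * ε ^ 3) ∧
            {p : EuclideanSpace ℝ (Fin m) × EuclideanSpace ℝ (Fin 2) |
                ‖p.2‖ < δ ∧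
                u₀ (ε⁻¹ • (p.2 - ε ^ 2 • g p.1)) + ε ^ 2 • θ (p.1, ε⁻¹ • p.2) = 0}
              = {p : EuclideanSpace ℝ (Fin m) × EuclideanSpace ℝ (Fin 2) |
                  p.2 = ζ p.1} := by
  classical
  obtain ⟨c₀, hc₀, hlow⟩ := hlow
  have hker : LinearMap.ker (fderiv ℝ u₀ 0 : EuclideanSpace ℝ (Fin 2) →ₗ[ℝ] EuclideanSpace ℝ (Fin 2)) = ⊥ := (LinearMap.ker_eq_bot (f := ((fderiv ℝ u₀ 0 : EuclideanSpace ℝ (Fin 2) →L[ℝ] EuclideanSpace ℝ (Fin 2)) : EuclideanSpace ℝ (Fin 2) →ₗ[ℝ] EuclideanSpace ℝ (Fin 2)))).mpr hinv.1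
  have hrange : LinearMap.range (fderiv ℝ u₀ 0 : EuclideanSpace ℝ (Fin 2) →ₗ[ℝ] EuclideanSpace ℝ (Fin 2)) = ⊤ := (LinearMap.range_eq_top (f := ((fderiv ℝ u₀ 0 : EuclideanSpace ℝ (Fin 2) →L[ℝ] EuclideanSpace ℝ (Fin 2)) : EuclideanSpace ℝ (Fin 2) →ₗ[ℝ] EuclideanSpace ℝ (Fin 2)))).mpr hinv.2
  set A : EuclideanSpace ℝ (Fin 2) →L[ℝ] EuclideanSpace ℝ (Fin 2) := fderiv ℝ u₀ 0 with hAdef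
  set A' := ContinuousLinearEquiv.ofBijective A hker hrange with hA'def
  have hA' : ∀ v, A' v = A v := fun v => rfl
  set N : ℝ := max 1 ‖(A'.symm : EuclideanSpace ℝ (Fin 2) →L[ℝ] EuclideanSpace ℝ (Fin 2))‖
    with hNdef
  have hN1 : (1 : ℝ) ≤ N := le_max_left _ _
  have hNpos : (0 : ℝ) < N := lt_of_lt_of_le one_pos hN1
  have hsymm_pos :
      (0 : ℝ) < ‖(A'.symm : EuclideanSpace ℝ (Fin 2) →L[ℝ] EuclideanSpace ℝ (Fin 2))‖ := by
    have := (A'.subsingleton_or_nnnorm_symm_pos).resolve_left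
      (not_subsingleton (EuclideanSpace ℝ (Fin 2)))
    exact_mod_cast this
  have hsymm_le : ‖(A'.symm : EuclideanSpace ℝ (Fin 2) →L[ℝ] EuclideanSpace ℝ (Fin 2))‖ ≤ N :=
    le_max_right _ _
  have hAinv : ∀ v : EuclideanSpace ℝ (Fin 2), ‖v‖ ≤ N * ‖A v‖ := by
    intro v
    have h1 :
        ‖A'.symm (A v)‖ ≤
          ‖(A'.symm : EuclideanSpace ℝ (Fin 2) →L[ℝ] EuclideanSpace ℝ (Fin 2))‖ * ‖A v‖ :=
      (A'.symm : EuclideanSpace ℝ (Fin 2) →L[ℝ] EuclideanSpace ℝ (Fin 2)).le_opNorm _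
    have h2 : A'.symm (A v) = v := by rw [← hA' v]; exact A'.symm_apply_apply v
    rw [h2] at h1
    exact h1.trans (by gcongr)
  -- strict derivative at 0, choice of r
  have hstrict : HasStrictFDerivAt u₀ A 0 := hu₀.contDiffAt.hasStrictFDerivAt one_ne_zero
  have h4N : (0:ℝ) < (4*N)⁻¹ := by positivity
  obtain ⟨s, hs, happrox⟩ :=
    hstrict.approximates_deriv_on_nhds (c := Real.toNNReal ((4*N)⁻¹))
      (Or.inr (Real.toNNReal_pos.mpr h4N))
  have hfc : Continuous (fderiv ℝ u₀) := hu₀.continuous_fderiv one_ne_zero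
  have hs2 : {τ : EuclideanSpace ℝ (Fin 2) | ‖fderiv ℝ u₀ τ - A‖ < (4*N)⁻¹} ∈
      nhds (0 : EuclideanSpace ℝ (Fin 2)) := by
    have hb := hfc.continuousAt (x := 0) (Metric.ball_mem_nhds (fderiv ℝ u₀ 0) h4N)
    refine Filter.mem_of_superset hb ?_
    intro τ hτ
    simpa [dist_eq_norm] using hτ
  obtain ⟨r₁, hr₁, hball⟩ := Metric.nhds_basis_closedBall.mem_iff.mp (Filter.inter_mem hs hs2)
  set r : ℝ := min r₁ 1 with hrdef
  have hr : 0 < r := lt_min hr₁ one_pos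
  have hr1 : r ≤ 1 := min_le_right _ _
  have hball' : closedBall (0:EuclideanSpace ℝ (Fin 2)) r ⊆
      s ∩ {τ | ‖fderiv ℝ u₀ τ - A‖ < (4*N)⁻¹} :=
    (Metric.closedBall_subset_closedBall (min_le_left _ _)).trans hball
  have happrox' : ApproximatesLinearOn u₀ A (closedBall 0 r) (Real.toNNReal ((4*N)⁻¹)) :=
    happrox.mono_set (fun x hx => (hball' hx).1)
  have hfder : ∀ τ ∈ closedBall (0:EuclideanSpace ℝ (Fin 2)) r, ‖fderiv ℝ u₀ τ - A‖ ≤ (4*N)⁻¹ :=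
    fun τ hτ => le_of_lt (hball' hτ).2
  -- constants
  refine ⟨min 1 (min ((4*N*K)⁻¹) (min (r/(2*N*K)) (r*c₀/(2*K)))), 1, K/c₀,
    by positivity, one_pos, by positivity, ?_⟩
  intro g θ hg hθ hgK hg'K hθK hθ'K ε hε hεε₀
  have hε1 : ε ≤ 1 := le_of_lt (lt_of_lt_of_le hεε₀ (min_le_left _ _))
  have hεa : ε < (4*N*K)⁻¹ := lt_of_lt_of_le hεε₀ ((min_le_right _ _).trans (min_le_left _ _))
  have hεb : ε < r/(2*N*K) :=
    lt_of_lt_of_le hεε₀ ((min_le_right _ _).trans ((min_le_right _ _).trans (min_le_left _ _)))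
  have hεc : ε < r*c₀/(2*K) :=
    lt_of_lt_of_le hεε₀ ((min_le_right _ _).trans ((min_le_right _ _).trans (min_le_right _ _)))
  have hε2 : ε^2 ≤ ε := by nlinarith
  have h1 : ε*(4*N*K) < 1 := by
    have := mul_lt_mul_of_pos_right hεa (show (0:ℝ) < 4*N*K by positivity)
    rwa [inv_mul_cancel₀ (by positivity)] at this
  have hKa : ε^2*K < (4*N)⁻¹ := by
    rw [inv_eq_one_div, lt_div_iff₀ (by positivity : (0:ℝ) < 4*N)]
    calc ε^2*K*(4*N) = ε^2*(4*N*K) := by ring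
      _ ≤ ε*(4*N*K) := mul_le_mul_of_nonneg_right hε2 (by positivity)
      _ < 1 := h1
  have hKb : ε^2*K < r/(2*N) := by
    rw [lt_div_iff₀ (by positivity : (0:ℝ) < 2*N)]
    have h2 : ε*(2*N*K) < r := by
      have := mul_lt_mul_of_pos_right hεb (show (0:ℝ) < 2*N*K by positivity)
      rwa [div_mul_cancel₀ _ (by positivity)] at this
    calc ε^2*K*(2*N) = ε^2*(2*N*K) := by ring
      _ ≤ ε*(2*N*K) := mul_le_mul_of_nonneg_right hε2 (by positivity)
      _ < r := h2
  have hρr : ε^2*K/c₀ < r/2 := by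
    rw [div_lt_div_iff₀ hc₀ (by norm_num : (0:ℝ) < 2)]
    have h2 : ε*(2*K) < r*c₀ := by
      have := mul_lt_mul_of_pos_right hεc (show (0:ℝ) < 2*K by positivity)
      rwa [div_mul_cancel₀ _ (by positivity)] at this
    calc ε^2*K*2 = ε^2*(2*K) := by ring
      _ ≤ ε*(2*K) := mul_le_mul_of_nonneg_right hε2 (by positivity)
      _ < r*c₀ := h2
  set ρ : ℝ := ε^2*K/c₀ with hρdef
  have hρ0 : 0 ≤ ρ := by positivity
  have hρ1 : ρ < 1 := lt_of_lt_of_le hρr (by linarith)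
  have hρltr : ρ < r := lt_of_lt_of_le hρr (by linarith)
  -- Lipschitz bound for θ
  have hθlip : ∀ p q, ‖θ p - θ q‖ ≤ K * ‖p - q‖ := by
    intro p q
    exact Convex.norm_image_sub_le_of_norm_fderiv_le
      (fun x _ => (hθ.differentiable one_ne_zero).differentiableAt)
      (fun x _ => hθ'K x) convex_univ (mem_univ q) (mem_univ p)
  -- the rescaled map
  set F : EuclideanSpace ℝ (Fin m) → EuclideanSpace ℝ (Fin 2) → EuclideanSpace ℝ (Fin 2) :=
    fun y w => u₀ w + ε^2 • θ (y, ε • g y + w) with hFdef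
  -- any zero of F y is small
  have hsmall : ∀ y w, F y w = 0 → ‖w‖ ≤ ρ := by
    intro y w hw
    have h0 : u₀ w = -(ε^2 • θ (y, ε • g y + w)) := by
      rw [hFdef] at hw; simpa [eq_neg_iff_add_eq_zero] using hw
    have h2 : ‖u₀ w‖ ≤ ε^2 * K := by
      rw [h0, norm_neg, norm_smul]
      simp only [Real.norm_eq_abs, abs_pow, sq_abs]
      exact mul_le_mul_of_nonneg_left (hθK _) (by positivity)
    have h3 : c₀ * min ‖w‖ 1 ≤ ε^2*K := (hlow w).trans h2
    have h4 : min ‖w‖ 1 ≤ ρ := by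
      rw [hρdef, le_div_iff₀ hc₀]
      linarith [h3]
    rcases le_total ‖w‖ 1 with h | h
    · rwa [min_eq_left h] at h4
    · exfalso; rw [min_eq_right h] at h4; linarith
  -- F y approximates A on the ball
  set c : NNReal := Real.toNNReal ((4*N)⁻¹ + ε^2*K) with hcdef
  have hcoec : (c : ℝ) = (4*N)⁻¹ + ε^2*K := Real.coe_toNNReal _ (by positivity)
  have hFapprox : ∀ y, ApproximatesLinearOn (F y) A (closedBall 0 r) c := by
    intro y x hx x' hx'
    have e1 : F y x - F y x' - A (x - x') =
        (u₀ x - u₀ x' - A (x - x')) + ε^2 • (θ (y, ε • g y + x) - θ (y, ε • g y + x')) := by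
      rw [hFdef]; simp only [smul_sub]; abel
    rw [e1]
    have e2 := happrox' x hx x' hx'
    rw [Real.coe_toNNReal _ (le_of_lt h4N)] at e2
    have e3 : ‖θ (y, ε • g y + x) - θ (y, ε • g y + x')‖ ≤ K * ‖x - x'‖ := by
      have := hθlip (y, ε • g y + x) (y, ε • g y + x')
      have e4 : ((y, ε • g y + x) : EuclideanSpace ℝ (Fin m) × EuclideanSpace ℝ (Fin 2)) -
          (y, ε • g y + x') = (0, x - x') := by
        ext <;> simp
      rw [e4] at this
      simpa [Prod.norm_def] using this
    calc ‖(u₀ x - u₀ x' - A (x - x')) + ε^2 • (θ (y, ε • g y + x) - θ (y, ε • g y + x'))‖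
        ≤ ‖u₀ x - u₀ x' - A (x - x')‖ + ‖ε^2 • (θ (y, ε • g y + x) - θ (y, ε • g y + x'))‖ :=
          norm_add_le _ _
      _ ≤ (4*N)⁻¹ * ‖x - x'‖ + ε^2 * (K * ‖x - x'‖) := by
          refine add_le_add e2 ?_
          rw [norm_smul]
          simp only [Real.norm_eq_abs, abs_pow, sq_abs]
          exact mul_le_mul_of_nonneg_left e3 (by positivity)
      _ = ((4*N)⁻¹ + ε^2*K) * ‖x - x'‖ := by ring
      _ = (c : ℝ) * ‖x - x'‖ := by rw [hcoec]
  have hcoeA : ((A' : EuclideanSpace ℝ (Fin 2) ≃L[ℝ] EuclideanSpace ℝ (Fin 2)) :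
      EuclideanSpace ℝ (Fin 2) →L[ℝ] EuclideanSpace ℝ (Fin 2)) = A :=
    ContinuousLinearEquiv.coe_ofBijective A hker hrange
  have hFapprox' : ∀ y, ApproximatesLinearOn (F y)
      ((A' : EuclideanSpace ℝ (Fin 2) ≃L[ℝ] EuclideanSpace ℝ (Fin 2)) :
        EuclideanSpace ℝ (Fin 2) →L[ℝ] EuclideanSpace ℝ (Fin 2)) (closedBall 0 r) c := by
    intro y; rw [hcoeA]; exact hFapprox y
  have h2N : (4*N)⁻¹ + (4*N)⁻¹ = (2*N)⁻¹ := by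
    field_simp
    ring
  have hcN : (c : ℝ) ≤ (2*N)⁻¹ := by
    rw [hcoec, ← h2N]; linarith
  have hNinv : N⁻¹ ≤ ‖(A'.symm : EuclideanSpace ℝ (Fin 2) →L[ℝ] EuclideanSpace ℝ (Fin 2))‖⁻¹ := by
    rw [inv_eq_one_div, inv_eq_one_div]
    exact one_div_le_one_div_of_le hsymm_pos hsymm_le
  have hclt : Subsingleton (EuclideanSpace ℝ (Fin 2)) ∨
      c < ‖(A'.symm : EuclideanSpace ℝ (Fin 2) →L[ℝ] EuclideanSpace ℝ (Fin 2))‖₊⁻¹ := by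
    right
    rw [← NNReal.coe_lt_coe, NNReal.coe_inv, coe_nnnorm]
    have h2 : (2*N)⁻¹ < N⁻¹ := by
      rw [inv_eq_one_div, inv_eq_one_div]
      exact one_div_lt_one_div_of_lt (by positivity) (by linarith)
    exact lt_of_le_of_lt hcN (lt_of_lt_of_le h2 hNinv)
  have huniq : ∀ y w w', F y w = 0 → F y w' = 0 → w = w' := by
    intro y w w' hw hw'
    have h1 := hsmall y w hw
    have h2 := hsmall y w' hw'
    refine (hFapprox' y).injOn hclt ?_ ?_ (hw.trans hw'.symm)
    · rw [mem_closedBall_zero_iff]; linarith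
    · rw [mem_closedBall_zero_iff]; linarith
  have hex : ∀ y, ∃ w, F y w = 0 ∧ ‖w‖ ≤ ρ := by
    intro y
    have hsurj := (hFapprox' y).surjOn_closedBall_of_nonlinearRightInverse
      A'.toNonlinearRightInverse (le_of_lt hr) (Set.Subset.refl (closedBall 0 r))
    have hFy0 : ‖F y 0‖ ≤ ε^2*K := by
      have : F y 0 = ε^2 • θ (y, ε • g y + 0) := by
        show u₀ 0 + ε^2 • θ (y, ε • g y + 0) = _
        rw [hu₀0, zero_add]
      rw [this, norm_smul]
      simp only [Real.norm_eq_abs, abs_pow, sq_abs]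
      exact mul_le_mul_of_nonneg_left (hθK _) (by positivity)
    have h0mem : (0 : EuclideanSpace ℝ (Fin 2)) ∈
        closedBall (F y 0) ((((A'.toNonlinearRightInverse.nnnorm : ℝ))⁻¹ - c) * r) := by
      rw [mem_closedBall, dist_comm, dist_zero_right]
      have hnn : ((A'.toNonlinearRightInverse.nnnorm : ℝ)) =
          ‖(A'.symm : EuclideanSpace ℝ (Fin 2) →L[ℝ] EuclideanSpace ℝ (Fin 2))‖ := rfl
      rw [hnn]
      have hrad : (2*N)⁻¹ * r ≤
          (‖(A'.symm : EuclideanSpace ℝ (Fin 2) →L[ℝ] EuclideanSpace ℝ (Fin 2))‖⁻¹ - (c:ℝ)) * r := by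
        apply mul_le_mul_of_nonneg_right _ (le_of_lt hr)
        have h2N' : (2*N)⁻¹ + (2*N)⁻¹ = N⁻¹ := by
          rw [← two_mul, mul_inv, ← mul_assoc, mul_inv_cancel₀ two_ne_zero, one_mul]
        linarith [hNinv, hcN]
      refine le_trans ?_ hrad
      rw [inv_eq_one_div, mul_comm, ← div_eq_mul_one_div]
      linarith [hKb]
    obtain ⟨w, hw, hFw⟩ := hsurj h0mem
    exact ⟨w, hFw, hsmall y w hFw⟩
  choose τ hτ0 hτρ using hex
  set ζ : EuclideanSpace ℝ (Fin m) → EuclideanSpace ℝ (Fin 2) :=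
    fun y => ε^2 • g y + ε • τ y with hζdef
  have hζbound : ∀ y, ‖ζ y - ε^2 • g y‖ ≤ K/c₀ * ε^3 := by
    intro y
    have : ζ y - ε^2 • g y = ε • τ y := add_sub_cancel_left _ _
    rw [this, norm_smul, Real.norm_eq_abs, abs_of_pos hε]
    calc ε * ‖τ y‖ ≤ ε * ρ := by
          exact mul_le_mul_of_nonneg_left (hτρ y) (le_of_lt hε)
      _ = K/c₀ * ε^3 := by rw [hρdef]; ring
  refine ⟨ζ, ?_, hζbound, ?_⟩
  · -- smoothness of ζ
    refine contDiff_iff_contDiffAt.mpr fun y₀ => ?_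
    set w₀ := τ y₀ with hw₀def
    set p₀ : EuclideanSpace ℝ (Fin m) × EuclideanSpace ℝ (Fin 2) := (y₀, w₀) with hp₀def
    set q₀ : EuclideanSpace ℝ (Fin m) × EuclideanSpace ℝ (Fin 2) := (y₀, ε • g y₀ + w₀)
      with hq₀def
    set Φ : (EuclideanSpace ℝ (Fin m) × EuclideanSpace ℝ (Fin 2)) →
        (EuclideanSpace ℝ (Fin m) × EuclideanSpace ℝ (Fin 2)) :=
      fun p => (p.1, u₀ p.2 + ε^2 • θ (p.1, ε • g p.1 + p.2)) with hΦdef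
    have hΦcd : ContDiff ℝ 1 Φ := by
      apply ContDiff.prodMk contDiff_fst
      exact (hu₀.comp contDiff_snd).add
        ((hθ.comp (contDiff_fst.prodMk
          (((hg.comp contDiff_fst).const_smul ε).add contDiff_snd))).const_smul (ε^2))
    set Du := fderiv ℝ u₀ w₀ with hDudef
    set Dg := fderiv ℝ g y₀ with hDgdef
    set Dθ := fderiv ℝ θ q₀ with hDθdef
    set T : (EuclideanSpace ℝ (Fin m) × EuclideanSpace ℝ (Fin 2)) →L[ℝ]
        (EuclideanSpace ℝ (Fin m) × EuclideanSpace ℝ (Fin 2)) :=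
      (ContinuousLinearMap.fst ℝ _ _).prod
        (Du.comp (ContinuousLinearMap.snd ℝ _ _) +
          ε^2 • Dθ.comp ((ContinuousLinearMap.fst ℝ _ _).prod
            ((ε • Dg.comp (ContinuousLinearMap.fst ℝ _ _)) +
              ContinuousLinearMap.snd ℝ _ _))) with hTdef
    have hTd : HasFDerivAt Φ T p₀ := by
      apply HasFDerivAt.prodMk
      · exact hasFDerivAt_fst
      · have h1 : HasFDerivAt
            (fun p : EuclideanSpace ℝ (Fin m) × EuclideanSpace ℝ (Fin 2) => u₀ p.2)
            (Du.comp (ContinuousLinearMap.snd ℝ _ _)) p₀ :=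
          ((hu₀.differentiable one_ne_zero) w₀).hasFDerivAt.comp p₀ hasFDerivAt_snd
        have hψ : HasFDerivAt
            (fun p : EuclideanSpace ℝ (Fin m) × EuclideanSpace ℝ (Fin 2) =>
              ((p.1, ε • g p.1 + p.2) :
                EuclideanSpace ℝ (Fin m) × EuclideanSpace ℝ (Fin 2)))
            ((ContinuousLinearMap.fst ℝ _ _).prod
              ((ε • Dg.comp (ContinuousLinearMap.fst ℝ _ _)) +
                ContinuousLinearMap.snd ℝ _ _)) p₀ := by
          apply HasFDerivAt.prodMk hasFDerivAt_fst
          exact ((((hg.differentiable one_ne_zero) y₀).hasFDerivAt.comp p₀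
            hasFDerivAt_fst).const_smul ε).add hasFDerivAt_snd
        have h2 : HasFDerivAt
            (fun p : EuclideanSpace ℝ (Fin m) × EuclideanSpace ℝ (Fin 2) =>
              θ (p.1, ε • g p.1 + p.2))
            (Dθ.comp ((ContinuousLinearMap.fst ℝ _ _).prod
              ((ε • Dg.comp (ContinuousLinearMap.fst ℝ _ _)) +
                ContinuousLinearMap.snd ℝ _ _))) p₀ :=
          ((hθ.differentiable one_ne_zero) q₀).hasFDerivAt.comp p₀ hψ
        exact h1.add (h2.const_smul (ε^2))
    -- T is bijective
    have hw₀r : ‖w₀‖ ≤ r := le_trans (hτρ y₀) (le_of_lt hρltr)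
    have hDuA : ‖Du - A‖ ≤ (4*N)⁻¹ := hfder w₀ (mem_closedBall_zero_iff.mpr hw₀r)
    have hDθn : ‖Dθ‖ ≤ K := hθ'K q₀
    have hTker : ∀ v : EuclideanSpace ℝ (Fin m) × EuclideanSpace ℝ (Fin 2),
        T v = 0 → v = 0 := by
      intro v hv
      have hv1 : v.1 = 0 := congrArg Prod.fst hv
      have hv2 : Du v.2 + ε^2 • Dθ (v.1, ε • Dg v.1 + v.2) = 0 := congrArg Prod.snd hv
      rw [hv1] at hv2
      have hz : ((0 : EuclideanSpace ℝ (Fin m)), ε • Dg (0 : EuclideanSpace ℝ (Fin m)) + v.2) =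
          ((0 : EuclideanSpace ℝ (Fin m)), v.2) := by
        rw [map_zero, smul_zero, zero_add]
      rw [hz] at hv2
      have hDu2 : Du v.2 = -(ε^2 • Dθ (0, v.2)) := by
        rw [eq_neg_iff_add_eq_zero]; exact hv2
      have hθv : ‖Dθ ((0 : EuclideanSpace ℝ (Fin m)), v.2)‖ ≤ K * ‖v.2‖ := by
        refine le_trans (Dθ.le_opNorm _) ?_
        have : ‖((0 : EuclideanSpace ℝ (Fin m)), v.2)‖ = ‖v.2‖ := by
          simp [Prod.norm_def]
        rw [this]
        exact mul_le_mul_of_nonneg_right hDθn (norm_nonneg _)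
      have hb1 : ‖Du v.2‖ ≤ ε^2 * (K * ‖v.2‖) := by
        rw [hDu2, norm_neg, norm_smul]
        simp only [Real.norm_eq_abs, abs_pow, sq_abs]
        exact mul_le_mul_of_nonneg_left hθv (by positivity)
      have hb2 : ‖v.2‖ ≤ N * ‖A v.2‖ := hAinv v.2
      have hb3 : ‖A v.2‖ ≤ ‖Du v.2‖ + (4*N)⁻¹ * ‖v.2‖ := by
        have e1 : A v.2 = Du v.2 - (Du - A) v.2 := by
          simp [ContinuousLinearMap.sub_apply]
        rw [e1]
        refine le_trans (norm_sub_le _ _) ?_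
        refine add_le_add le_rfl ?_
        exact le_trans ((Du - A).le_opNorm v.2)
          (mul_le_mul_of_nonneg_right hDuA (norm_nonneg _))
      have hεK : ε^2 * (K * ‖v.2‖) ≤ (4*N)⁻¹ * ‖v.2‖ := by
        have := mul_le_mul_of_nonneg_right (le_of_lt hKa) (norm_nonneg v.2)
        calc ε^2 * (K * ‖v.2‖) = ε^2*K*‖v.2‖ := by ring
          _ ≤ (4*N)⁻¹ * ‖v.2‖ := this
      have hN4 : N * (4*N)⁻¹ = 4⁻¹ := by
        field_simp
      have hfin : ‖v.2‖ ≤ 2⁻¹ * ‖v.2‖ := by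
        calc ‖v.2‖ ≤ N * ‖A v.2‖ := hb2
          _ ≤ N * (‖Du v.2‖ + (4*N)⁻¹ * ‖v.2‖) := by
              exact mul_le_mul_of_nonneg_left hb3 (le_of_lt hNpos)
          _ ≤ N * ((4*N)⁻¹ * ‖v.2‖ + (4*N)⁻¹ * ‖v.2‖) := by
              refine mul_le_mul_of_nonneg_left ?_ (le_of_lt hNpos)
              exact add_le_add (le_trans hb1 hεK) le_rfl
          _ = (N * (4*N)⁻¹) * (2 * ‖v.2‖) := by ring
          _ = 2⁻¹ * ‖v.2‖ := by rw [hN4]; ring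
      have hv2z : v.2 = 0 := by
        have : ‖v.2‖ ≤ 0 := by linarith
        exact norm_eq_zero.mp (le_antisymm this (norm_nonneg _))
      rw [Prod.ext_iff]
      exact ⟨hv1, hv2z⟩
    have hTinj : Function.Injective T := by
      intro a b hab
      have := hTker (a - b) (by rw [map_sub, hab, sub_self])
      exact sub_eq_zero.mp this
    have hTbij : Function.Bijective T :=
      ⟨hTinj, (LinearMap.injective_iff_surjective_of_finrank_eq_finrank rfl
        (f := (T : (EuclideanSpace ℝ (Fin m) × EuclideanSpace ℝ (Fin 2)) →ₗ[ℝ]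
          (EuclideanSpace ℝ (Fin m) × EuclideanSpace ℝ (Fin 2))))).mp hTinj⟩
    set Te := LinearEquiv.toContinuousLinearEquiv
      (LinearEquiv.ofBijective (T : (EuclideanSpace ℝ (Fin m) × EuclideanSpace ℝ (Fin 2)) →ₗ[ℝ]
        (EuclideanSpace ℝ (Fin m) × EuclideanSpace ℝ (Fin 2))) hTbij) with hTedef
    have hTecoe : (Te : (EuclideanSpace ℝ (Fin m) × EuclideanSpace ℝ (Fin 2)) →L[ℝ]
        (EuclideanSpace ℝ (Fin m) × EuclideanSpace ℝ (Fin 2))) = T :=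
      ContinuousLinearMap.ext fun v => rfl
    have hΦat : ContDiffAt ℝ 1 Φ p₀ := hΦcd.contDiffAt
    have hTd' : HasFDerivAt Φ ((Te : (EuclideanSpace ℝ (Fin m) × EuclideanSpace ℝ (Fin 2)) →L[ℝ]
        (EuclideanSpace ℝ (Fin m) × EuclideanSpace ℝ (Fin 2)))) p₀ := by
      rw [hTecoe]; exact hTd
    have hΨcd : ContDiffAt ℝ 1 (hΦat.localInverse hTd' one_ne_zero) (Φ p₀) :=
      hΦat.to_localInverse hTd' one_ne_zero
    set Ψ := hΦat.localInverse hTd' one_ne_zero with hΨdef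
    have hΦp₀ : Φ p₀ = (y₀, 0) := congrArg (Prod.mk y₀) (hτ0 y₀)
    have hri : ∀ᶠ q in nhds ((y₀, 0) : EuclideanSpace ℝ (Fin m) × EuclideanSpace ℝ (Fin 2)),
        Φ (Ψ q) = q := by
      have h := (hΦat.hasStrictFDerivAt' hTd' one_ne_zero).eventually_right_inverse
      rw [hΦp₀] at h
      exact h
    have hev : ∀ᶠ y in nhds y₀, Φ (Ψ (y, 0)) = (y, 0) := by
      have hcont : ContinuousAt (fun y : EuclideanSpace ℝ (Fin m) =>
          ((y, 0) : EuclideanSpace ℝ (Fin m) × EuclideanSpace ℝ (Fin 2))) y₀ :=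
        (continuous_id.prodMk continuous_const).continuousAt
      exact hcont.eventually hri
    have hev2 : ∀ᶠ y in nhds y₀, ζ y = ε^2 • g y + ε • (Ψ (y, 0)).2 := by
      filter_upwards [hev] with y hy
      have h1 : (Ψ (y, 0)).1 = y := congrArg Prod.fst hy
      have h2 : F (Ψ (y, 0)).1 (Ψ (y, 0)).2 = 0 := congrArg Prod.snd hy
      rw [h1] at h2
      have h3 : (Ψ (y, 0)).2 = τ y := huniq y _ _ h2 (hτ0 y)
      rw [h3]
    have htarget : ContDiffAt ℝ 1
        (fun y => ε^2 • g y + ε • (Ψ (y, 0)).2) y₀ := by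
      have hΨ0 : ContDiffAt ℝ 1 Ψ ((y₀, 0) :
          EuclideanSpace ℝ (Fin m) × EuclideanSpace ℝ (Fin 2)) := by
        rw [← hΦp₀]; exact hΨcd
      have hι : ContDiffAt ℝ 1 (fun y : EuclideanSpace ℝ (Fin m) =>
          ((y, 0) : EuclideanSpace ℝ (Fin m) × EuclideanSpace ℝ (Fin 2))) y₀ :=
        (contDiff_id.prodMk contDiff_const).contDiffAt
      have hc1 : ContDiffAt ℝ 1 (fun y : EuclideanSpace ℝ (Fin m) => Ψ (y, 0)) y₀ :=
        hΨ0.comp y₀ hι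
      exact (hg.contDiffAt.const_smul (ε^2)).add (hc1.snd.const_smul ε)
    exact htarget.congr_of_eventuallyEq hev2
  · -- set equality
    ext p
    obtain ⟨y, z⟩ := p
    simp only [Set.mem_setOf_eq]
    have hεinv2 : ε⁻¹ * ε^2 = ε := by field_simp [ne_of_gt hε]
    constructor
    · rintro ⟨hz, heq⟩
      set w : EuclideanSpace ℝ (Fin 2) := ε⁻¹ • (z - ε^2 • g y) with hwdef
      have harg : ε⁻¹ • z = ε • g y + w := by
        rw [hwdef, smul_sub, smul_smul, hεinv2]
        abel
      have hF : F y w = 0 := by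
        show u₀ w + ε^2 • θ (y, ε • g y + w) = 0
        rw [← harg]
        exact heq
      have hwτ : w = τ y := huniq y w (τ y) hF (hτ0 y)
      have hz' : z = ε^2 • g y + ε • w := by
        rw [hwdef, smul_smul, mul_inv_cancel₀ (ne_of_gt hε), one_smul]
        abel
      show z = ζ y
      rw [hz', hwτ]
    · intro hz
      have hz : z = ζ y := hz
      have hτval : ε⁻¹ • (ζ y - ε^2 • g y) = τ y := by
        have : ζ y - ε^2 • g y = ε • τ y := add_sub_cancel_left _ _
        rw [this, smul_smul, inv_mul_cancel₀ (ne_of_gt hε), one_smul]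
      have hζinv : ε⁻¹ • ζ y = ε • g y + τ y := by
        rw [hζdef, smul_add, smul_smul, smul_smul, hεinv2, inv_mul_cancel₀ (ne_of_gt hε), one_smul]
      constructor
      · rw [hz]
        have h1 : ‖ζ y‖ ≤ ε^2*K + ε*ρ := by
          rw [hζdef]
          refine le_trans (norm_add_le _ _) ?_
          rw [norm_smul, norm_smul]
          simp only [Real.norm_eq_abs, abs_pow, sq_abs, abs_of_pos hε]
          exact add_le_add (mul_le_mul_of_nonneg_left (hgK y) (by positivity))
            (mul_le_mul_of_nonneg_left (hτρ y) (le_of_lt hε))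
        have h2 : ε*ρ ≤ ρ := by
          nlinarith
        have h3 : (4*N)⁻¹ ≤ (4:ℝ)⁻¹ := by
          rw [inv_eq_one_div, inv_eq_one_div]
          exact one_div_le_one_div_of_le (by norm_num) (by linarith)
        calc ‖ζ y‖ ≤ ε^2*K + ε*ρ := h1
          _ < 1 := by nlinarith [hKa, hρr, hr1, h3]
      · rw [hz, hτval, hζinv]
        exact hτ0 y

end
end
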